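/- Height bound for p-th powers: with notation as above (g = (r−1)s > 2, d prime to p), if (x, y) is an 𝔽_q(t)-rational point on y^r = (x^s+1)(x^s+t^{ds})/x^s and x = u/v (coprime) is a p-th power, then δ = max{deg u, deg v} ≤ (2d(g−1) − 1)/(g − 2). -/

import Mathlib

open Polynomial

lemma sqf_dvd {R : Type*} [CommRing R] [IsDomain R] [IsPrincipalIdealRing R]
    {S Q : R} (hS : Squarefree S) (h : ∀ π : R, Prime π → π ∣ S → π ∣ Q) : S ∣ Q := by
  revert hS h
  refine UniqueFactorizationMonoid.induction_on_prime S ?_ ?_ ?_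
  · intro h _; exact absurd h not_squarefree_zero
  · intro x hx _ _; exact hx.dvd
  · intro a π ha hπ IH hsq h
    have hπa : ¬ π ∣ a := fun hd => hπ.not_unit (hsq π (mul_dvd_mul_left π hd))
    have hcop : IsCoprime π a := (hπ.irreducible.coprime_iff_not_dvd).mpr hπa
    exact hcop.mul_dvd (h π hπ (Dvd.intro a rfl))
      (IH hsq.of_mul_right (fun ρ hρ hd => h ρ hρ (hd.mul_left π)))

section Core
variable {F : Type*} [Field F] {p r s d : ℕ} [hp : Fact p.Prime] [CharP F p]

omit [CharP F p] in
lemma W_ne_zero (hs : 0 < s) (hpd : ¬ p ∣ d) (hps : ¬ p ∣ s)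
    {U V : Polynomial F} (hUV : IsCoprime U V) (hU : U ≠ 0) :
    U ^ (p*s) + X ^ (d*s) * V ^ (p*s) ≠ 0 := by
  intro h0
  have hps0 : 0 < p * s := Nat.mul_pos hp.out.pos hs
  have hU' : U ^ (p*s) = -(X ^ (d*s) * V ^ (p*s)) := by linear_combination h0
  have hVdvd : V ^ (p*s) ∣ U ^ (p*s) := by
    rw [hU']; exact Dvd.dvd.neg_right (Dvd.intro_left _ rfl)
  have hcop : IsCoprime (U ^ (p*s)) (V ^ (p*s)) := (hUV.pow : _)
  have hVunit : IsUnit (V ^ (p*s)) := hcop.isUnit_of_dvd' hVdvd dvd_rfl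
  have hV0 : V ≠ 0 := by
    rintro rfl
    rw [zero_pow hps0.ne', mul_zero, neg_zero, pow_eq_zero_iff hps0.ne'] at hU'
    exact hU hU'
  have hdegV : natDegree (V ^ (p*s)) = 0 := natDegree_eq_zero_of_isUnit hVunit
  have hdeg : natDegree (U ^ (p*s)) = natDegree (X ^ (d*s) * V ^ (p*s)) := by
    rw [hU', natDegree_neg]
  rw [natDegree_mul (pow_ne_zero _ X_ne_zero) (pow_ne_zero _ hV0),
    natDegree_X_pow, hdegV, natDegree_pow] at hdeg
  have : p ∣ d * s := ⟨s * U.natDegree, by linarith [hdeg]⟩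
  rcases (Nat.Prime.dvd_mul hp.out).mp this with h | h
  exacts [hpd h, hps h]

lemma core_deg_bound (hr : 2 ≤ r) (hs : 0 < s) (hd : 0 < d) (hpd : ¬ p ∣ d) (hps : ¬ p ∣ s)
    {U V a b : Polynomial F} (hUV : IsCoprime U V) (hab : IsCoprime a b)
    (hU : U ≠ 0) (hV : V ≠ 0) (ha : a ≠ 0) (hb : b ≠ 0)
    (E : a ^ r * (U ^ (p*s) * V ^ (p*s)) =
      b ^ r * ((U ^ (p*s) + V ^ (p*s)) * (U ^ (p*s) + X ^ (d*s) * V ^ (p*s)))) :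
    (U ^ (p*s) + X ^ (d*s) * V ^ (p*s)).natDegree ≤ 2 * (d * s) := by
  set W : Polynomial F := U ^ (p*s) + X ^ (d*s) * V ^ (p*s) with hW
  have hW0 : W ≠ 0 := W_ne_zero hs hpd hps hUV hU
  have hds : 0 < d * s := Nat.mul_pos hd hs
  have hps0 : 0 < p * s := Nat.mul_pos hp.out.pos hs
  -- the derivative of W
  have hpsF : ((p * s : ℕ) : Polynomial F) = 0 :=
    (CharP.cast_eq_zero_iff (Polynomial F) p _).mpr ⟨s, rfl⟩
  have hdsF : ((d * s : ℕ) : F) ≠ 0 := by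
    rw [Ne, CharP.cast_eq_zero_iff F p]
    intro hdvd
    rcases (Nat.Prime.dvd_mul hp.out).mp hdvd with h | h
    exacts [hpd h, hps h]
  have hpsF' : Polynomial.C ((p * s : ℕ) : F) = 0 := by
    rw [Polynomial.C_eq_natCast, hpsF]
  have hdsFunit : IsUnit (Polynomial.C ((d * s : ℕ) : F)) :=
    isUnit_C.mpr (isUnit_iff_ne_zero.mpr hdsF)
  have hdW : derivative W = Polynomial.C ((d * s : ℕ) : F) * X ^ (d*s - 1) * V ^ (p*s) := by
    simp only [hW, derivative_add, derivative_mul, derivative_pow, derivative_X, hpsF']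
    ring
  -- no prime square divides W away from X
  have claim2 : ∀ π : Polynomial F, Prime π → ¬ π ∣ X → ¬ (π * π ∣ W) := by
    intro π hπ hπX hsq
    have hπW : π ∣ W := (dvd_mul_right π π).trans hsq
    have hπV : ¬ π ∣ V := by
      intro h
      have h1 : π ∣ X ^ (d*s) * V ^ (p*s) := ((h.pow hps0.ne').mul_left _)
      have h2 : π ∣ U ^ (p*s) := by
        have := dvd_sub hπW h1
        simpa [hW] using this
      exact hπ.not_unit (hUV.isUnit_of_dvd' (hπ.dvd_of_dvd_pow h2) h)
    have hπd : π ∣ derivative W := by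
      obtain ⟨m, hm⟩ := hsq
      rw [hm, derivative_mul, derivative_mul]
      have h1 : π ∣ derivative π * π + π * derivative π :=
        dvd_add (dvd_mul_left π (derivative π)) (dvd_mul_right π (derivative π))
      exact dvd_add (h1.mul_right m) (dvd_mul_of_dvd_left (dvd_mul_right π π) (derivative m))
    rw [hdW] at hπd
    have hπd2 : π ∣ X ^ (d*s - 1) * V ^ (p*s) := by
      rw [mul_assoc] at hπd
      exact (hdsFunit.dvd_mul_left).mp hπd
    rcases hπ.dvd_mul.mp hπd2 with h | h
    · exact hπX (hπ.dvd_of_dvd_pow h)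
    · exact hπV (hπ.dvd_of_dvd_pow h)
  -- every prime factor of W other than X divides X^{ds} - 1
  have keyclaim : ∀ π : Polynomial F, Prime π → ¬ π ∣ X → π ∣ W → π ∣ X ^ (d*s) - 1 := by
    intro π hπ hπX hπW
    by_contra hπQ
    have hπV : ¬ π ∣ V := by
      intro h
      have h1 : π ∣ X ^ (d*s) * V ^ (p*s) := ((h.pow hps0.ne').mul_left _)
      have h2 : π ∣ U ^ (p*s) := by
        have := dvd_sub hπW h1
        simpa [hW] using this
      exact hπ.not_unit (hUV.isUnit_of_dvd' (hπ.dvd_of_dvd_pow h2) h)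
    have hπU : ¬ π ∣ U := by
      intro h
      have h1 : π ∣ U ^ (p*s) := h.pow hps0.ne'
      have h2 : π ∣ X ^ (d*s) * V ^ (p*s) := by
        have := dvd_sub hπW h1
        simpa [hW] using this
      rcases hπ.dvd_mul.mp h2 with h' | h'
      · exact hπX (hπ.dvd_of_dvd_pow h')
      · exact hπV (hπ.dvd_of_dvd_pow h')
    have hπsum : ¬ π ∣ (U ^ (p*s) + V ^ (p*s)) := by
      intro h
      have h1 : π ∣ (X ^ (d*s) - 1) * V ^ (p*s) := by
        have := dvd_sub hπW h
        have heq2 : W - (U ^ (p*s) + V ^ (p*s)) = (X ^ (d*s) - 1) * V ^ (p*s) := by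
          rw [hW]; ring
        rwa [heq2] at this
      rcases hπ.dvd_mul.mp h1 with h' | h'
      · exact hπQ h'
      · exact hπV (hπ.dvd_of_dvd_pow h')
    -- π divides a
    have hπa : π ∣ a := by
      have h1 : π ∣ a ^ r * (U ^ (p*s) * V ^ (p*s)) := by
        rw [E]; exact (hπW.mul_left _).mul_left _
      rcases hπ.dvd_mul.mp h1 with h' | h'
      · exact hπ.dvd_of_dvd_pow h'
      · rcases hπ.dvd_mul.mp h' with h'' | h''
        · exact absurd (hπ.dvd_of_dvd_pow h'') hπU
        · exact absurd (hπ.dvd_of_dvd_pow h'') hπV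
    have hπb : ¬ π ∣ b := fun h => hπ.not_unit (hab.isUnit_of_dvd' hπa h)
    -- π² divides the left side of E, hence W twice — contradiction
    have hsq : π * π ∣ W := by
      have hL : π * π ∣ a ^ r * (U ^ (p*s) * V ^ (p*s)) := by
        have : π * π ∣ a ^ r := by
          have h2 : a ^ 2 ∣ a ^ r := pow_dvd_pow a hr
          rw [sq] at h2
          exact (mul_dvd_mul hπa hπa).trans h2
        exact this.mul_right _
      rw [E] at hL
      have hco : IsCoprime (π * π) (b ^ r * (U ^ (p*s) + V ^ (p*s))) := by
        have c1 : IsCoprime π (b ^ r) :=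
          ((hπ.irreducible.coprime_iff_not_dvd).mpr hπb).pow_right
        have c2 : IsCoprime π (U ^ (p*s) + V ^ (p*s)) :=
          (hπ.irreducible.coprime_iff_not_dvd).mpr hπsum
        exact (c1.mul_right c2).mul_left (c1.mul_right c2)
      apply hco.dvd_of_dvd_mul_left
      rw [show b ^ r * (U ^ (p*s) + V ^ (p*s)) * W
          = b ^ r * ((U ^ (p*s) + V ^ (p*s)) * W) by ring]
      exact hL
    exact claim2 π hπ hπX hsq
  -- X-multiplicity of W is at most d*s
  have hX1 : ¬ X ^ (d*s + 1) ∣ W := by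
    intro h2
    have hXW : (X : Polynomial F) ∣ W := (dvd_pow_self X (Nat.succ_ne_zero _)).trans h2
    have hXU : (X : Polynomial F) ∣ U := by
      have h1 : (X : Polynomial F) ∣ X ^ (d*s) * V ^ (p*s) :=
        (dvd_pow_self X hds.ne').mul_right _
      have h3 : (X : Polynomial F) ∣ U ^ (p*s) := by
        have := dvd_sub hXW h1
        simpa [hW] using this
      exact prime_X.dvd_of_dvd_pow h3
    have hXV : ¬ (X : Polynomial F) ∣ V :=
      fun h => Polynomial.not_isUnit_X (hUV.isUnit_of_dvd' hXU h)
    obtain ⟨U₀, hU₀, hXU₀⟩ :=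
      (FiniteMultiplicity.of_not_isUnit Polynomial.not_isUnit_X hU).exists_eq_pow_mul_and_not_dvd
    set j := multiplicity X U with hj
    have hj1 : 1 ≤ j := by
      by_contra hcon
      push_neg at hcon
      interval_cases j
      · rw [pow_zero, one_mul] at hU₀
        exact hXU₀ (hU₀ ▸ hXU)
    have hUps : U ^ (p*s) = X ^ (p*s*j) * U₀ ^ (p*s) := by
      rw [hU₀, mul_pow, ← pow_mul, mul_comm j (p*s)]
    have hne : p*s*j ≠ d*s := by
      intro he
      have h' : s * (p * j) = s * d := by
        rw [show s * (p * j) = p * s * j by ring, he, Nat.mul_comm d s]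
      have : p * j = d := Nat.eq_of_mul_eq_mul_left hs h' 
      exact hpd ⟨j, this.symm⟩
    rcases lt_or_gt_of_ne hne with hlt | hgt
    · -- p*s*j < d*s
      have k1 : p*s*j + 1 ≤ d*s := hlt
      have d1 : X ^ (p*s*j + 1) ∣ W := (pow_dvd_pow X (by omega)).trans h2
      have d2 : (X:Polynomial F) ^ (p*s*j + 1) ∣ X ^ (d*s) * V ^ (p*s) :=
        (pow_dvd_pow X k1).mul_right _
      have d3 : (X:Polynomial F) ^ (p*s*j + 1) ∣ U ^ (p*s) := by
        have := dvd_sub d1 d2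
        simpa [hW] using this
      rw [hUps] at d3
      have d4 : (X:Polynomial F) ^ (p*s*j) * X ∣ X ^ (p*s*j) * U₀ ^ (p*s) := by
        rw [← pow_succ]; exact d3
      have : (X:Polynomial F) ∣ U₀ ^ (p*s) :=
        (mul_dvd_mul_iff_left (pow_ne_zero (p*s*j) (X_ne_zero (R := F)))).mp d4
      exact hXU₀ (prime_X.dvd_of_dvd_pow this)
    · -- p*s*j > d*s
      have d1 : (X:Polynomial F) ^ (d*s + 1) ∣ U ^ (p*s) := by
        rw [hUps]
        exact (pow_dvd_pow X (by omega)).mul_right _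
      have d2 : (X:Polynomial F) ^ (d*s + 1) ∣ X ^ (d*s) * V ^ (p*s) := by
        have := dvd_sub h2 d1
        have heq2 : W - U ^ (p*s) = X ^ (d*s) * V ^ (p*s) := by rw [hW]; ring
        rwa [heq2] at this
      rw [pow_succ] at d2
      have : (X:Polynomial F) ∣ V ^ (p*s) :=
        (mul_dvd_mul_iff_left (pow_ne_zero (d*s) (X_ne_zero (R := F)))).mp d2
      exact hXV (prime_X.dvd_of_dvd_pow this)
  -- decompose W = X^k * S
  obtain ⟨S, hWS, hXS⟩ :=
    (FiniteMultiplicity.of_not_isUnit Polynomial.not_isUnit_X hW0).exists_eq_pow_mul_and_not_dvd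
  set k := multiplicity X W with hk
  have hkds : k ≤ d*s := by
    by_contra hcon
    push_neg at hcon
    exact hX1 ((pow_dvd_pow X hcon).trans ⟨S, hWS⟩)
  have hS0 : S ≠ 0 := by rintro rfl; rw [mul_zero] at hWS; exact hW0 hWS
  have hSW : S ∣ W := ⟨X ^ k, by rw [hWS]; ring⟩
  have hprimeX : ∀ π : Polynomial F, Prime π → π ∣ S → ¬ π ∣ X := by
    intro π hπ hπS hπX
    have : Associated π X := hπ.irreducible.associated_of_dvd Polynomial.irreducible_X hπX
    exact hXS (this.symm.dvd.trans hπS)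
  have hSsqf : Squarefree S := by
    rw [squarefree_iff_no_irreducibles hS0]
    intro π hirr hsq
    have hπ : Prime π := hirr.prime
    exact claim2 π hπ (hprimeX π hπ ((dvd_mul_right π π).trans hsq)) (hsq.trans hSW)
  have hSdvd : S ∣ X ^ (d*s) - 1 :=
    sqf_dvd hSsqf (fun π hπ hπS => keyclaim π hπ (hprimeX π hπ hπS) (hπS.trans hSW))
  have hQ0 : (X : Polynomial F) ^ (d*s) - 1 ≠ 0 := by
    intro h
    have h1 : (X : Polynomial F) ^ (d*s) = 1 := by linear_combination h
    have := congrArg natDegree h1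
    rw [natDegree_X_pow, natDegree_one] at this
    omega
  have hWdvd : W ∣ X ^ (d*s) * (X ^ (d*s) - 1) := by
    rw [hWS]
    exact mul_dvd_mul (pow_dvd_pow X hkds) hSdvd
  have hdegQ : (X ^ (d*s) * ((X:Polynomial F) ^ (d*s) - 1)).natDegree = 2 * (d*s) := by
    rw [natDegree_mul (pow_ne_zero _ X_ne_zero) hQ0, natDegree_X_pow]
    have : ((X:Polynomial F) ^ (d*s) - 1).natDegree = d*s := by
      rw [show ((X:Polynomial F) ^ (d*s) - 1) = X ^ (d*s) - C 1 by rw [map_one]]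
      exact natDegree_X_pow_sub_C
    omega
  calc W.natDegree ≤ _ := natDegree_le_of_dvd hWdvd (mul_ne_zero (pow_ne_zero _ X_ne_zero) hQ0)
  _ = 2 * (d*s) := hdegQ
end Core

lemma exists_pow_rep {Fq : Type*} [Field Fq] [Fintype Fq] {p : ℕ} [hp : Fact p.Prime]
    [CharP Fq p] {x z : RatFunc Fq} (hx : x ≠ 0) (hz : z ^ p = x) {u v : Polynomial Fq}
    (huv : IsCoprime u v) (hv : v ≠ 0)
    (hxuv : x = algebraMap (Polynomial Fq) (RatFunc Fq) u /
              algebraMap (Polynomial Fq) (RatFunc Fq) v) :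
    ∃ U V : Polynomial Fq, u = U ^ p ∧ v = V ^ p := by
  have hp0 : p ≠ 0 := hp.out.pos.ne'
  have hz0 : z ≠ 0 := by rintro rfl; rw [zero_pow hp0] at hz; exact hx hz.symm
  set A := z.num with hA
  set B := z.denom with hB
  have hB0 : B ≠ 0 := z.denom_ne_zero
  have hA0 : A ≠ 0 := RatFunc.num_ne_zero hz0
  have hAB : IsCoprime A B := RatFunc.isCoprime_num_denom z
  have hu0 : u ≠ 0 := by
    rintro rfl; rw [map_zero, zero_div] at hxuv; exact hx hxuv
  have hinj := RatFunc.algebraMap_injective Fq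
  have hφv : algebraMap (Polynomial Fq) (RatFunc Fq) v ≠ 0 :=
    (map_ne_zero_iff _ hinj).mpr hv
  have hφB : algebraMap (Polynomial Fq) (RatFunc Fq) B ≠ 0 :=
    (map_ne_zero_iff _ hinj).mpr hB0
  -- cross-multiplied identity
  have cross : u * B ^ p = v * A ^ p := by
    apply hinj
    have hzz : algebraMap (Polynomial Fq) (RatFunc Fq) A /
        algebraMap (Polynomial Fq) (RatFunc Fq) B = z := RatFunc.num_div_denom z
    have : (algebraMap (Polynomial Fq) (RatFunc Fq) A /
        algebraMap (Polynomial Fq) (RatFunc Fq) B) ^ p =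
        algebraMap (Polynomial Fq) (RatFunc Fq) u /
        algebraMap (Polynomial Fq) (RatFunc Fq) v := by rw [hzz, hz, hxuv]
    field_simp at this
    rw [div_pow, div_mul_eq_mul_div, div_eq_iff (pow_ne_zero _ hφB)] at this
    push_cast [map_mul, map_pow]
    linear_combination -this
  have h1 : u ∣ A ^ p := huv.dvd_of_dvd_mul_left ⟨B ^ p, by linear_combination -cross⟩
  have h2 : A ^ p ∣ u := (hAB.pow : IsCoprime (A ^ p) (B ^ p)).dvd_of_dvd_mul_right
    ⟨v, by linear_combination cross⟩
  obtain ⟨w, hw⟩ := (associated_of_dvd_dvd h2 h1)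
  obtain ⟨c, hcu, hcw⟩ := Polynomial.isUnit_iff.mp w.isUnit
  obtain ⟨e, he⟩ := (Finite.injective_iff_surjective.mp (frobenius_inj Fq p)) c
  have hCe : (C e : Polynomial Fq) ^ p = C c := by
    rw [← map_pow, show e ^ p = c from he]
  have hu' : u = C c * A ^ p := by rw [hcw]; linear_combination -hw
  have hv' : v = C c * B ^ p := by
    have hc : A ^ p * (C c * B ^ p) = A ^ p * v := by
      rw [hu'] at cross
      linear_combination cross
    have := mul_left_cancel₀ (pow_ne_zero p hA0) hc
    exact this.symm
  refine ⟨C e * A, C e * B, ?_, ?_⟩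
  · rw [mul_pow, hCe, hu']
  · rw [mul_pow, hCe, hv']

theorem stmt13 (Fq : Type*) [Field Fq] [Fintype Fq]
    (p : ℕ) [Fact p.Prime] [CharP Fq p]
    (r s : ℕ) (hr : 1 ≤ r) (hs : 1 ≤ s)
    (hpr : Nat.Coprime p r) (hps : Nat.Coprime p s) (hrs : Nat.Coprime r s)
    (g : ℕ) (hg : g = (r - 1) * s) (hg2 : 2 < g)
    (d : ℕ) (hd : 0 < d) (hdp : Nat.Coprime d p)
    (x y : RatFunc Fq) (hx : x ≠ 0)
    (heq : y ^ r = (x ^ s + 1) * (x ^ s + (RatFunc.X : RatFunc Fq) ^ (d * s)) / x ^ s)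
    (u v : Polynomial Fq) (huv : IsCoprime u v) (hv : v ≠ 0)
    (hxuv : x = algebraMap (Polynomial Fq) (RatFunc Fq) u /
              algebraMap (Polynomial Fq) (RatFunc Fq) v)
    (δ : ℕ) (hδ : δ = max u.natDegree v.natDegree)
    (hp : ∃ z : RatFunc Fq, z ^ p = x) :
    (δ : ℚ) ≤ (2 * (d : ℚ) * ((g : ℚ) - 1) - 1) / ((g : ℚ) - 2) := by
  have hp' : p.Prime := Fact.out
  have hgq3 : (3:ℚ) ≤ (g:ℚ) := by exact_mod_cast hg2
  have hdq1 : (1:ℚ) ≤ (d:ℚ) := by exact_mod_cast hd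
  have hden : (0:ℚ) < (g:ℚ) - 2 := by linarith
  have hr2 : 2 ≤ r := by
    by_contra h
    push_neg at h
    have h1 : r - 1 = 0 := by omega
    rw [hg, h1, zero_mul] at hg2
    omega
  have hpd : ¬ p ∣ d := (Nat.Prime.coprime_iff_not_dvd hp').mp hdp.symm
  have hpsd : ¬ p ∣ s := (Nat.Prime.coprime_iff_not_dvd hp').mp hps
  have hu0 : u ≠ 0 := by
    rintro rfl
    rw [map_zero, zero_div] at hxuv
    exact hx hxuv
  obtain ⟨z, hz⟩ := hp
  obtain ⟨U, V, hU, hV⟩ := exists_pow_rep hx hz huv hv hxuv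
  have hU0 : U ≠ 0 := by rintro rfl; rw [zero_pow hp'.pos.ne'] at hU; exact hu0 hU
  have hV0 : V ≠ 0 := by rintro rfl; rw [zero_pow hp'.pos.ne'] at hV; exact hv hV
  have hUV : IsCoprime U V := by
    have h := huv
    rw [hU, hV] at h
    exact (IsCoprime.pow_left_iff hp'.pos).mp ((IsCoprime.pow_right_iff hp'.pos).mp h)
  by_cases hsum : u ^ s + v ^ s = 0
  · -- then u and v are units, so δ = 0
    have e1 : v ^ s = -(u ^ s) := by linear_combination hsum
    have e2 : u ^ s = -(v ^ s) := by linear_combination hsum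
    have hu_unit : IsUnit u :=
      (huv.pow_right (n := s)).isUnit_of_dvd' dvd_rfl
        (e1 ▸ (dvd_pow_self u (by omega : s ≠ 0)).neg_right)
    have hv_unit : IsUnit v :=
      ((huv.symm.pow_right (n := s)).isUnit_of_dvd' dvd_rfl
        (e2 ▸ (dvd_pow_self v (by omega : s ≠ 0)).neg_right))
    have hδ0 : δ = 0 := by
      rw [hδ, Polynomial.natDegree_eq_zero_of_isUnit hu_unit,
        Polynomial.natDegree_eq_zero_of_isUnit hv_unit]
      simp
    rw [hδ0]
    push_cast
    apply div_nonneg _ (by linarith)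
    nlinarith
  · -- main case
    have hinj : Function.Injective (algebraMap (Polynomial Fq) (RatFunc Fq)) :=
      RatFunc.algebraMap_injective Fq
    have hφu : algebraMap (Polynomial Fq) (RatFunc Fq) u ≠ 0 := (map_ne_zero_iff _ hinj).mpr hu0
    have hφv : algebraMap (Polynomial Fq) (RatFunc Fq) v ≠ 0 := (map_ne_zero_iff _ hinj).mpr hv
    have hW0 : u ^ s + Polynomial.X ^ (d*s) * v ^ s ≠ 0 := by
      have h := W_ne_zero (F := Fq) (p := p) (d := d) (by omega) hpd hpsd hUV hU0
      rw [hU, hV, ← pow_mul, ← pow_mul]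
      exact h
    have hφsum : algebraMap (Polynomial Fq) (RatFunc Fq) (u ^ s + v ^ s) ≠ 0 :=
      (map_ne_zero_iff _ hinj).mpr hsum
    have hφW : algebraMap (Polynomial Fq) (RatFunc Fq)
        (u ^ s + Polynomial.X ^ (d*s) * v ^ s) ≠ 0 := (map_ne_zero_iff _ hinj).mpr hW0
    have e1 : (x ^ s + 1) * (algebraMap (Polynomial Fq) (RatFunc Fq) v) ^ s
        = algebraMap (Polynomial Fq) (RatFunc Fq) (u ^ s + v ^ s) := by
      rw [hxuv]
      push_cast [map_add, map_pow]
      field_simp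
      rw [div_pow, add_mul, div_mul_cancel₀ _ (pow_ne_zero _ hφv), one_mul]
    have e2 : (x ^ s + (RatFunc.X : RatFunc Fq) ^ (d * s)) *
        (algebraMap (Polynomial Fq) (RatFunc Fq) v) ^ s
        = algebraMap (Polynomial Fq) (RatFunc Fq)
            (u ^ s + Polynomial.X ^ (d*s) * v ^ s) := by
      rw [hxuv]
      push_cast [map_add, map_mul, map_pow, RatFunc.algebraMap_X]
      field_simp
      rw [div_pow, add_mul, div_mul_cancel₀ _ (pow_ne_zero _ hφv)]
    have hy0 : y ≠ 0 := by
      intro h0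
      rw [h0, zero_pow (by omega : r ≠ 0)] at heq
      have hxs : x ^ s ≠ 0 := pow_ne_zero _ hx
      field_simp at heq
      rw [zero_mul, eq_comm, mul_eq_zero] at heq
      rcases heq with h2 | h2
      · apply hφsum
        rw [← e1, h2, zero_mul]
      · apply hφW
        rw [← e2, h2, zero_mul]
    obtain ⟨a, b, hab, ha0, hb0, hyy⟩ : ∃ a b : Polynomial Fq, IsCoprime a b ∧ a ≠ 0 ∧ b ≠ 0 ∧
        algebraMap (Polynomial Fq) (RatFunc Fq) a /
          algebraMap (Polynomial Fq) (RatFunc Fq) b = y :=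
      ⟨y.num, y.denom, RatFunc.isCoprime_num_denom y, RatFunc.num_ne_zero hy0,
        y.denom_ne_zero, RatFunc.num_div_denom y⟩
    have hφb : algebraMap (Polynomial Fq) (RatFunc Fq) b ≠ 0 :=
      (map_ne_zero_iff _ hinj).mpr hb0
    have ER : (algebraMap (Polynomial Fq) (RatFunc Fq) a) ^ r *
          ((algebraMap (Polynomial Fq) (RatFunc Fq) u) ^ s *
            (algebraMap (Polynomial Fq) (RatFunc Fq) v) ^ s) =
        (algebraMap (Polynomial Fq) (RatFunc Fq) b) ^ r *
          (((algebraMap (Polynomial Fq) (RatFunc Fq) u) ^ s +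
              (algebraMap (Polynomial Fq) (RatFunc Fq) v) ^ s) *
            ((algebraMap (Polynomial Fq) (RatFunc Fq) u) ^ s +
              (RatFunc.X : RatFunc Fq) ^ (d * s) *
                (algebraMap (Polynomial Fq) (RatFunc Fq) v) ^ s)) := by
      rw [hxuv, ← hyy] at heq
      field_simp at heq
      rw [div_pow, div_pow, div_mul_div_comm, div_add_one (pow_ne_zero _ hφv), div_add' _ _ _ (pow_ne_zero _ hφv), div_mul_div_comm, div_eq_div_iff (mul_ne_zero (pow_ne_zero _ hφb) (pow_ne_zero _ hφv)) (mul_ne_zero (pow_ne_zero _ hφv) (pow_ne_zero _ hφv))] at heq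
      apply mul_left_cancel₀ (pow_ne_zero s hφv)
      linear_combination heq
    have Epoly : a ^ r * (u ^ s * v ^ s) =
        b ^ r * ((u ^ s + v ^ s) * (u ^ s + Polynomial.X ^ (d*s) * v ^ s)) := by
      apply hinj
      simp only [map_mul, map_add, map_pow, RatFunc.algebraMap_X]
      linear_combination ER
    rw [hU, hV, ← pow_mul, ← pow_mul] at Epoly
    have hbound := core_deg_bound (p := p) (r := r) (s := s) (d := d)
      hr2 (by omega) hd hpd hpsd hUV hab hU0 hV0 ha0 hb0 Epoly
    -- extract degree bounds
    have hdUu : u.natDegree = p * U.natDegree := by rw [hU, Polynomial.natDegree_pow]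
    have hdVv : v.natDegree = p * V.natDegree := by rw [hV, Polynomial.natDegree_pow]
    have t1 : ((U : Polynomial Fq) ^ (p*s)).natDegree = p * s * U.natDegree :=
      Polynomial.natDegree_pow U (p*s)
    have t2 : ((Polynomial.X : Polynomial Fq) ^ (d*s) * V ^ (p*s)).natDegree
        = d * s + p * s * V.natDegree := by
      rw [Polynomial.natDegree_mul (pow_ne_zero _ Polynomial.X_ne_zero) (pow_ne_zero _ hV0),
        Polynomial.natDegree_X_pow, Polynomial.natDegree_pow]
    have tne : p * s * U.natDegree ≠ d * s + p * s * V.natDegree := by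
      intro he
      apply hpd
      have hcast : (d : ℤ) = (p : ℤ) * ((U.natDegree : ℤ) - (V.natDegree : ℤ)) := by
        have h1 : (p : ℤ) * s * U.natDegree = d * s + p * s * V.natDegree := by exact_mod_cast he
        have hs1 : (1 : ℤ) ≤ (s : ℤ) := by exact_mod_cast hs
        have hs0 : (s : ℤ) ≠ 0 := by omega
        apply mul_left_cancel₀ hs0
        linear_combination -h1
      have h2 : (p : ℤ) ∣ (d : ℤ) := ⟨(U.natDegree : ℤ) - (V.natDegree : ℤ), hcast⟩
      exact_mod_cast h2
    have hboth : p * s * U.natDegree ≤ 2 * (d * s) ∧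
        d * s + p * s * V.natDegree ≤ 2 * (d * s) := by
      rcases lt_or_gt_of_ne tne with hlt | hgt
      · have heqW : ((U : Polynomial Fq) ^ (p*s) +
            Polynomial.X ^ (d*s) * V ^ (p*s)).natDegree = d * s + p * s * V.natDegree := by
          rw [Polynomial.natDegree_add_eq_right_of_natDegree_lt (by rw [t1, t2]; exact hlt), t2]
        rw [heqW] at hbound
        exact ⟨le_trans (le_of_lt hlt) hbound, hbound⟩
      · have heqW : ((U : Polynomial Fq) ^ (p*s) +
            Polynomial.X ^ (d*s) * V ^ (p*s)).natDegree = p * s * U.natDegree := by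
          rw [Polynomial.natDegree_add_eq_left_of_natDegree_lt (by rw [t1, t2]; exact hgt), t1]
        rw [heqW] at hbound
        exact ⟨hbound, le_trans (le_of_lt hgt) hbound⟩
    have hdu : u.natDegree ≤ 2 * d := by
      have c1 : s * (p * U.natDegree) ≤ s * (2 * d) := by
        calc s * (p * U.natDegree) = p * s * U.natDegree := by ring
        _ ≤ 2 * (d * s) := hboth.1
        _ = s * (2 * d) := by ring
      rw [hdUu]
      exact Nat.le_of_mul_le_mul_left c1 (by omega)
    have hdv : v.natDegree ≤ d := by
      have c0 : d * s + p * s * V.natDegree ≤ d * s + d * s := by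
        have := hboth.2
        rwa [two_mul] at this
      have c1 : s * (p * V.natDegree) ≤ s * d := by
        calc s * (p * V.natDegree) = p * s * V.natDegree := by ring
        _ ≤ d * s := Nat.le_of_add_le_add_left c0
        _ = s * d := by ring
      rw [hdVv]
      exact Nat.le_of_mul_le_mul_left c1 (by omega)
    have hδ2d : δ ≤ 2 * d := by
      rw [hδ]
      exact max_le hdu (le_trans hdv (by omega))
    have hδq : (δ : ℚ) ≤ 2 * (d:ℚ) := by exact_mod_cast hδ2d
    rw [le_div_iff₀ hden]
    nlinarith [mul_le_mul_of_nonneg_right hδq (le_of_lt hden)]
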